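/- Let μ₁ be a probability measure on ℝ^∞ (infinite sequences of reals), β the shift β(x₁,x₂,…) = (x₂,x₃,…), and for each n let H_n ⊆ L_2(μ₁) be the closed subspace of functions not depending on the n-th coordinate x_n. Suppose U₁ ∈ L_2(μ₁) with |U₁| = 1 a.e., h_k : ℝ → {−1,+1} are Borel, and define ψ_n(x₁,x₂,…) = h_n(x_n) and assume ψ_n = U₁ · (h₁∘π₁)⋯(h_{n−1}∘π_{n−1}) · V_{n+1} a.e. where V_{n+1} depends only on coordinates x_{n+1}, x_{n+2}, …. Then dist(ψ_n, H_n) = dist(U₁, H_n), and dist(U₁, H_n) → 0 as n → ∞. -/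

import Mathlib

open MeasureTheory Filter
open scoped ENNReal NNReal

/-- `g` does not depend on the `n`-th coordinate. -/
def NotDependOn (n : ℕ) (g : (ℕ → ℝ) → ℂ) : Prop :=
  ∀ x y : ℕ → ℝ, (∀ k, k ≠ n → x k = y k) → g x = g y

/-- The subspace `H_n ⊆ L₂(μ₁)` of (a.e. classes of) functions not depending on `x_n`
(its metric closure is implicit in `Metric.infDist`). -/
def Hset (μ₁ : Measure (ℕ → ℝ)) (n : ℕ) : Set (Lp ℂ 2 μ₁) :=
  {g : Lp ℂ 2 μ₁ | ∃ g₀ : (ℕ → ℝ) → ℂ, Measurable g₀ ∧ NotDependOn n g₀ ∧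
    (g : (ℕ → ℝ) → ℂ) =ᵐ[μ₁] g₀}

lemma eLpNorm_mul_unimod {μ : Measure (ℕ → ℝ)} {f W : (ℕ → ℝ) → ℂ}
    (hW : ∀ᵐ x ∂μ, ‖W x‖ = 1) :
    eLpNorm (fun x => f x * W x) 2 μ = eLpNorm f 2 μ := by
  refine eLpNorm_congr_norm_ae ?_
  filter_upwards [hW] with x hx
  simp [norm_mul, hx]

lemma zero_mem_Hset (μ : Measure (ℕ → ℝ)) (n : ℕ) : (0 : Lp ℂ 2 μ) ∈ Hset μ n :=
  ⟨fun _ => 0, measurable_const, fun _ _ _ => rfl, Lp.coeFn_zero _ _ _⟩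

lemma infDist_le_of_fact {μ : Measure (ℕ → ℝ)} {n : ℕ}
    {ψ U W : (ℕ → ℝ) → ℂ} (hψ : MemLp ψ 2 μ) (hU : MemLp U 2 μ)
    (hWmeas : Measurable W) (hWmod : ∀ᵐ x ∂μ, ‖W x‖ = 1)
    (hWind : NotDependOn n W)
    (hfac : ψ =ᵐ[μ] fun x => U x * W x) :
    Metric.infDist (hψ.toLp ψ) (Hset μ n) ≤ Metric.infDist (hU.toLp U) (Hset μ n) := by
  haveI : Nonempty (Hset μ n) := ⟨⟨0, zero_mem_Hset μ n⟩⟩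
  conv_rhs => rw [Metric.infDist_eq_iInf]
  refine le_ciInf fun g => ?_
  obtain ⟨g₀, hg₀meas, hg₀ind, hgae⟩ := g.2
  set q : (ℕ → ℝ) → ℂ := fun x => g₀ x * W x with hq
  have hg₀mem : MemLp g₀ 2 μ := (Lp.memLp (g : Lp ℂ 2 μ)).ae_eq hgae
  have hqmem : MemLp q 2 μ :=
    ⟨(hg₀meas.mul hWmeas).aestronglyMeasurable, by
      rw [show q = fun x => g₀ x * W x from rfl, eLpNorm_mul_unimod hWmod]; exact hg₀mem.2⟩
  have hqH : hqmem.toLp q ∈ Hset μ n := by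
    refine ⟨q, hg₀meas.mul hWmeas, ?_, hqmem.coeFn_toLp⟩
    intro x y hxy
    simp only [hq, hg₀ind x y hxy, hWind x y hxy]
  have hdist : dist (hψ.toLp ψ) (hqmem.toLp q) = dist (hU.toLp U) (g : Lp ℂ 2 μ) := by
    rw [Lp.dist_def, Lp.dist_def]
    congr 1
    have h1 : (⇑(hψ.toLp ψ) - ⇑(hqmem.toLp q)) =ᵐ[μ] fun x => (U x - g₀ x) * W x := by
      filter_upwards [hψ.coeFn_toLp, hqmem.coeFn_toLp, hfac] with x e1 e2 e3
      rw [Pi.sub_apply, e1, e2, e3, hq, sub_mul]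
    have h2 : (⇑(hU.toLp U) - ⇑(g : Lp ℂ 2 μ)) =ᵐ[μ] fun x => U x - g₀ x := by
      filter_upwards [hU.coeFn_toLp, hgae] with x e1 e2
      simp only [Pi.sub_apply, e1, e2]
    rw [eLpNorm_congr_ae h1, eLpNorm_congr_ae h2, eLpNorm_mul_unimod hWmod]
  calc Metric.infDist (hψ.toLp ψ) (Hset μ n) ≤ dist (hψ.toLp ψ) (hqmem.toLp q) :=
        Metric.infDist_le_dist_of_mem hqH
    _ = dist (hU.toLp U) (g : Lp ℂ 2 μ) := hdist

/-- the filtration of the first `n` coordinates -/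
def myFilt : MeasureTheory.Filtration ℕ (inferInstance : MeasurableSpace (ℕ → ℝ)) where
  seq n := ⨆ i, ⨆ _ : i < n, MeasurableSpace.comap (fun x : ℕ → ℝ => x i) inferInstance
  mono' := fun _ _ hnm => iSup_le fun i => iSup_le fun hi =>
    le_iSup_of_le i (le_iSup (fun _ => _) (lt_of_lt_of_le hi hnm))
  le' := fun _ => iSup_le fun i => iSup_le fun _ =>
    (measurable_pi_apply i).comap_le

lemma myFilt_iSup : (⨆ n, (myFilt n : MeasurableSpace (ℕ → ℝ)))
    = (inferInstance : MeasurableSpace (ℕ → ℝ)) := by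
  refine le_antisymm (iSup_le fun n => myFilt.le n) ?_
  have hid : @Measurable (ℕ → ℝ) (ℕ → ℝ) (⨆ n, (myFilt n : MeasurableSpace (ℕ → ℝ)))
      MeasurableSpace.pi id := by
    refine (@measurable_pi_iff (ℕ → ℝ) ℕ (fun _ => ℝ)
      (⨆ n, (myFilt n : MeasurableSpace (ℕ → ℝ))) (fun _ => inferInstance) id).2 fun i => ?_
    refine Measurable.of_comap_le ?_
    refine le_trans ?_ (le_iSup _ (i + 1))
    exact le_iSup_of_le i (le_iSup (fun _ => _) (Nat.lt_succ_self i))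
  simpa [MeasurableSpace.comap_id] using hid.comap_le

lemma notDependOn_of_filt {n : ℕ} {g : (ℕ → ℝ) → ℂ}
    (hg : Measurable[myFilt n] g) : NotDependOn n g := by
  classical
  set ρ : (ℕ → ℝ) → (ℕ → ℝ) := fun x k => if k < n then x k else 0 with hρ
  have hle : (myFilt n : MeasurableSpace (ℕ → ℝ)) ≤
      MeasurableSpace.comap ρ inferInstance := by
    refine iSup_le fun i => iSup_le fun hi => ?_
    have heq : (fun x : ℕ → ℝ => x i) = (fun y : ℕ → ℝ => y i) ∘ ρ := by
      funext x; simp [hρ, hi]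
    rw [heq, ← MeasurableSpace.comap_comp]
    exact MeasurableSpace.comap_mono (measurable_pi_apply i).comap_le
  intro x y hxy
  have hg' : Measurable[MeasurableSpace.comap ρ inferInstance] g := hg.mono hle le_rfl
  obtain ⟨t, -, ht⟩ := hg' (measurableSet_singleton (g x))
  have hxmem : x ∈ ρ ⁻¹' t := by rw [ht]; exact rfl
  have hρxy : ρ x = ρ y := by
    funext k
    simp only [hρ]
    split_ifs with hk
    · exact hxy k (by omega)
    · rfl
  have hymem : y ∈ ρ ⁻¹' t := by
    simp only [Set.mem_preimage] at hxmem ⊢; rw [← hρxy]; exact hxmem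
  rw [ht] at hymem
  exact hymem.symm

lemma eLpNorm_two_le_of_bdd {μ : Measure (ℕ → ℝ)} [IsProbabilityMeasure μ]
    {f : (ℕ → ℝ) → ℝ} (hbdd : ∀ᵐ x ∂μ, ‖f x‖ ≤ 2) :
    eLpNorm f 2 μ ≤ (2 * eLpNorm f 1 μ) ^ (1 / 2 : ℝ) := by
  rw [eLpNorm_eq_lintegral_rpow_enorm_toReal (by norm_num) (by norm_num)]
  simp only [ENNReal.toReal_ofNat, enorm_eq_nnnorm]
  refine ENNReal.rpow_le_rpow ?_ (by norm_num)
  have hb : ∀ᵐ x ∂μ, (‖f x‖₊ : ℝ≥0∞) ^ (2 : ℝ) ≤ 2 * ‖f x‖₊ := by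
    filter_upwards [hbdd] with x hx
    have h1 : ((‖f x‖₊ : ℝ≥0∞)) ^ (2 : ℝ) = (‖f x‖₊ : ℝ≥0∞) * ‖f x‖₊ := by
      rw [show (2 : ℝ) = ((2 : ℕ) : ℝ) by norm_num, ENNReal.rpow_natCast]; ring
    have h2 : (‖f x‖₊ : ℝ≥0∞) ≤ 2 := by
      rw [← enorm_eq_nnnorm, ← ofReal_norm_eq_enorm, show (2 : ℝ≥0∞) = ENNReal.ofReal 2 by norm_num]
      exact ENNReal.ofReal_le_ofReal hx
    rw [h1]
    exact mul_le_mul_left h2 _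
  calc ∫⁻ x, (‖f x‖₊ : ℝ≥0∞) ^ (2 : ℝ) ∂μ ≤ ∫⁻ x, 2 * ‖f x‖₊ ∂μ := lintegral_mono_ae hb
    _ = 2 * ∫⁻ x, (‖f x‖₊ : ℝ≥0∞) ∂μ := lintegral_const_mul' _ _ (by norm_num)
    _ = 2 * eLpNorm f 1 μ := by rw [eLpNorm_one_eq_lintegral_enorm]; rfl

lemma l2_condexp_tendsto {μ : Measure (ℕ → ℝ)} [IsProbabilityMeasure μ]
    {f : (ℕ → ℝ) → ℝ} (hmeas : Measurable f) (hbdd : ∀ᵐ x ∂μ, |f x| ≤ 1) :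
    Tendsto (fun n => eLpNorm (μ[f|myFilt n] - f) 2 μ) atTop (nhds 0) := by
  have hint : Integrable f μ := by
    rw [← memLp_one_iff_integrable]
    exact MemLp.of_bound hmeas.aestronglyMeasurable 1
      (by filter_upwards [hbdd] with x hx; rwa [Real.norm_eq_abs])
  have hL1 : Tendsto (fun n => eLpNorm (μ[f|myFilt n] - f) 1 μ) atTop (nhds 0) := by
    refine hint.tendsto_eLpNorm_condExp ?_
    rw [myFilt_iSup]
    exact hmeas.stronglyMeasurable
  have hbd2 : ∀ n, ∀ᵐ x ∂μ, ‖(μ[f|myFilt n] - f) x‖ ≤ 2 := by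
    intro n
    have hc := ae_bdd_condExp_of_ae_bdd (m := myFilt n) (μ := μ) (R := 1)
      (by filter_upwards [hbdd] with x hx; simpa using hx)
    filter_upwards [hc, hbdd] with x h1 h2
    rw [Pi.sub_apply]
    calc ‖(μ[f|myFilt n]) x - f x‖ ≤ ‖(μ[f|myFilt n]) x‖ + ‖f x‖ := norm_sub_le _ _
      _ ≤ 1 + 1 := add_le_add (by simpa [Real.norm_eq_abs] using h1)
          (by simpa [Real.norm_eq_abs] using h2)
      _ = 2 := by norm_num
  have hkey : ∀ n, eLpNorm (μ[f|myFilt n] - f) 2 μ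
      ≤ (2 * eLpNorm (μ[f|myFilt n] - f) 1 μ) ^ (1 / 2 : ℝ) :=
    fun n => eLpNorm_two_le_of_bdd (hbd2 n)
  have htend : Tendsto (fun n => (2 * eLpNorm (μ[f|myFilt n] - f) 1 μ) ^ (1 / 2 : ℝ))
      atTop (nhds 0) := by
    have h1 : Tendsto (fun n => 2 * eLpNorm (μ[f|myFilt n] - f) 1 μ) atTop (nhds 0) := by
      simpa using ENNReal.Tendsto.const_mul hL1 (Or.inr (by norm_num : (2:ℝ≥0∞) ≠ ⊤))
    have h2 := (ENNReal.continuous_rpow_const (y := (1/2 : ℝ))).continuousAt.tendsto.comp h1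
    simpa [Function.comp_def, ENNReal.zero_rpow_of_pos] using h2
  exact tendsto_of_tendsto_of_tendsto_of_le_of_le tendsto_const_nhds htend
    (fun n => zero_le) hkey

theorem stmt_14 (μ₁ : Measure (ℕ → ℝ)) [IsProbabilityMeasure μ₁]
    (U₁ : (ℕ → ℝ) → ℂ) (hU₁meas : Measurable U₁)
    (hU₁mod : ∀ᵐ x ∂μ₁, ‖U₁ x‖ = 1)
    (hU₁mem : MemLp U₁ 2 μ₁)
    (h : ℕ → ℝ → ℝ) (hhmeas : ∀ k, Measurable (h k))
    (hhval : ∀ k x, h k x = -1 ∨ h k x = 1)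
    (hψmem : ∀ n, MemLp (fun x : ℕ → ℝ => ((h n (x n) : ℝ) : ℂ)) 2 μ₁)
    (hfact : ∀ n, ∃ V : (ℕ → ℝ) → ℂ, Measurable V ∧
      (∀ x y : ℕ → ℝ, (∀ k, n + 1 ≤ k → x k = y k) → V x = V y) ∧
      ∀ᵐ x ∂μ₁, ((h n (x n) : ℝ) : ℂ)
        = U₁ x * (∏ k ∈ Finset.range n, ((h k (x k) : ℝ) : ℂ)) * V x) :
    (∀ n, Metric.infDist (MemLp.toLp _ (hψmem n)) (Hset μ₁ n)
        = Metric.infDist (MemLp.toLp U₁ hU₁mem) (Hset μ₁ n)) ∧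
      Tendsto (fun n => Metric.infDist (MemLp.toLp U₁ hU₁mem) (Hset μ₁ n))
        atTop (nhds 0) := by
  constructor
  · -- Part 1
    intro n
    obtain ⟨V, hVmeas, hVdep, hVfac⟩ := hfact n
    have habs1 : ∀ k x, ‖((h k x : ℝ) : ℂ)‖ = 1 := by
      intro k x
      rcases hhval k x with h' | h' <;> simp [h']
    set M : (ℕ → ℝ) → ℂ := fun x => ∏ k ∈ Finset.range n, ((h k (x k) : ℝ) : ℂ) with hM
    have hMmeas : Measurable M :=
      Finset.measurable_prod _ fun k _ =>
        Complex.measurable_ofReal.comp ((hhmeas k).comp (measurable_pi_apply k))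
    have hMabs : ∀ x, ‖M x‖ = 1 := by
      intro x
      rw [hM]
      simp only
      rw [norm_prod]
      exact Finset.prod_eq_one fun k _ => habs1 k (x k)
    set W : (ℕ → ℝ) → ℂ := fun x => M x * V x with hW
    have hWmeas : Measurable W := hMmeas.mul hVmeas
    have hfacW : (fun x : ℕ → ℝ => ((h n (x n) : ℝ) : ℂ)) =ᵐ[μ₁] fun x => U₁ x * W x := by
      filter_upwards [hVfac] with x hx
      rw [hx, mul_assoc]
    have hWmod : ∀ᵐ x ∂μ₁, ‖W x‖ = 1 := by
      filter_upwards [hVfac, hU₁mod] with x hx h1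
      have habs : ‖(((h n (x n) : ℝ) : ℂ))‖ = 1 := habs1 n (x n)
      rw [hx, mul_assoc, norm_mul, h1, one_mul] at habs
      exact habs
    have hWind : NotDependOn n W := by
      intro x y hxy
      have hMxy : M x = M y :=
        Finset.prod_congr rfl fun k hk => by rw [hxy k (Finset.mem_range.1 hk).ne]
      have hVxy : V x = V y := hVdep x y fun k hk => hxy k (by omega)
      simp only [hW, hMxy, hVxy]
    have hle1 : Metric.infDist (MemLp.toLp _ (hψmem n)) (Hset μ₁ n)
        ≤ Metric.infDist (MemLp.toLp U₁ hU₁mem) (Hset μ₁ n) :=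
      infDist_le_of_fact (hψmem n) hU₁mem hWmeas hWmod hWind hfacW
    -- reverse direction
    set W' : (ℕ → ℝ) → ℂ := fun x => (starRingEnd ℂ) (W x) with hW'
    have hW'meas : Measurable W' := Complex.continuous_conj.measurable.comp hWmeas
    have hW'mod : ∀ᵐ x ∂μ₁, ‖W' x‖ = 1 := by
      filter_upwards [hWmod] with x hx
      simp only [hW', Complex.norm_conj, hx]
    have hW'ind : NotDependOn n W' := fun x y hxy => by
      simp only [hW', hWind x y hxy]
    have hfacW' : U₁ =ᵐ[μ₁] fun x => ((h n (x n) : ℝ) : ℂ) * W' x := by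
      filter_upwards [hfacW, hWmod] with x h1 h2
      rw [h1, hW']
      simp only
      rw [mul_assoc, Complex.mul_conj, Complex.normSq_eq_norm_sq, h2]
      norm_num
    have hle2 : Metric.infDist (MemLp.toLp U₁ hU₁mem) (Hset μ₁ n)
        ≤ Metric.infDist (MemLp.toLp _ (hψmem n)) (Hset μ₁ n) :=
      infDist_le_of_fact hU₁mem (hψmem n) hW'meas hW'mod hW'ind hfacW'
    exact le_antisymm hle1 hle2
  · -- Part 2
    set fre : (ℕ → ℝ) → ℝ := fun x => (U₁ x).re with hfre
    set fim : (ℕ → ℝ) → ℝ := fun x => (U₁ x).im with hfim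
    have hre_meas : Measurable fre := Complex.measurable_re.comp hU₁meas
    have him_meas : Measurable fim := Complex.measurable_im.comp hU₁meas
    have hre_bdd : ∀ᵐ x ∂μ₁, |fre x| ≤ 1 := by
      filter_upwards [hU₁mod] with x hx
      exact (Complex.abs_re_le_norm _).trans hx.le
    have him_bdd : ∀ᵐ x ∂μ₁, |fim x| ≤ 1 := by
      filter_upwards [hU₁mod] with x hx
      exact (Complex.abs_im_le_norm _).trans hx.le
    have Tre := l2_condexp_tendsto hre_meas hre_bdd
    have Tim := l2_condexp_tendsto him_meas him_bdd
    set g : ℕ → (ℕ → ℝ) → ℂ := fun n x =>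
      (((μ₁[fre|myFilt n]) x : ℝ) : ℂ) + (((μ₁[fim|myFilt n]) x : ℝ) : ℂ) * Complex.I with hg
    have hgsm : ∀ n, StronglyMeasurable[myFilt n] (g n) := fun n =>
      (Complex.continuous_ofReal.comp_stronglyMeasurable stronglyMeasurable_condExp).add
        ((Complex.continuous_ofReal.comp_stronglyMeasurable stronglyMeasurable_condExp).mul_const
          Complex.I)
    have hgmeas : ∀ n, Measurable (g n) := fun n =>
      ((hgsm n).mono (myFilt.le n)).measurable
    have hgnd : ∀ n, NotDependOn n (g n) := fun n =>
      notDependOn_of_filt ((hgsm n).measurable)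
    have hgbdd : ∀ n, ∀ᵐ x ∂μ₁, ‖g n x‖ ≤ 2 := by
      intro n
      have hc1 := ae_bdd_condExp_of_ae_bdd (m := myFilt n) (μ := μ₁) (R := 1)
        (by filter_upwards [hre_bdd] with x hx; simpa using hx)
      have hc2 := ae_bdd_condExp_of_ae_bdd (m := myFilt n) (μ := μ₁) (R := 1)
        (by filter_upwards [him_bdd] with x hx; simpa using hx)
      filter_upwards [hc1, hc2] with x h1 h2
      calc ‖g n x‖ ≤ ‖(((μ₁[fre|myFilt n]) x : ℝ) : ℂ)‖
            + ‖(((μ₁[fim|myFilt n]) x : ℝ) : ℂ) * Complex.I‖ := norm_add_le _ _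
        _ = |(μ₁[fre|myFilt n]) x| + |(μ₁[fim|myFilt n]) x| := by
            simp [norm_mul, Complex.norm_I, Complex.norm_real, Real.norm_eq_abs]
        _ ≤ 1 + 1 := add_le_add (by simpa using h1) (by simpa using h2)
        _ = 2 := by norm_num
    have hgmem : ∀ n, MemLp (g n) 2 μ₁ := fun n =>
      MemLp.of_bound (hgmeas n).aestronglyMeasurable 2 (hgbdd n)
    set D : ℕ → ℝ≥0∞ := fun n => eLpNorm (fun x => U₁ x - g n x) 2 μ₁ with hD
    have hDle : ∀ n, D n ≤ eLpNorm (μ₁[fre|myFilt n] - fre) 2 μ₁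
        + eLpNorm (μ₁[fim|myFilt n] - fim) 2 μ₁ := by
      intro n
      set A : (ℕ → ℝ) → ℂ := fun x => ((fre x - (μ₁[fre|myFilt n]) x : ℝ) : ℂ) with hA
      set B : (ℕ → ℝ) → ℂ :=
        fun x => ((fim x - (μ₁[fim|myFilt n]) x : ℝ) : ℂ) * Complex.I with hB
      have hc1meas : Measurable (μ₁[fre|myFilt n]) :=
        (stronglyMeasurable_condExp.mono (myFilt.le n)).measurable
      have hc2meas : Measurable (μ₁[fim|myFilt n]) :=
        (stronglyMeasurable_condExp.mono (myFilt.le n)).measurable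
      have heq : (fun x => U₁ x - g n x) = fun x => A x + B x := by
        funext x
        simp only [hg, hA, hB]
        rw [← Complex.re_add_im (U₁ x)]
        push_cast
        ring
      have hAnorm : eLpNorm A 2 μ₁ = eLpNorm (μ₁[fre|myFilt n] - fre) 2 μ₁ := by
        refine eLpNorm_congr_norm_ae (Eventually.of_forall fun x => ?_)
        simp only [hA, Pi.sub_apply, Complex.norm_real]
        exact norm_sub_rev _ _
      have hBnorm : eLpNorm B 2 μ₁ = eLpNorm (μ₁[fim|myFilt n] - fim) 2 μ₁ := by
        refine eLpNorm_congr_norm_ae (Eventually.of_forall fun x => ?_)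
        simp only [hB, Pi.sub_apply, norm_mul, Complex.norm_I, Complex.norm_real, mul_one]
        exact norm_sub_rev _ _
      rw [hD]
      simp only
      rw [heq, ← hAnorm, ← hBnorm]
      exact eLpNorm_add_le
        (Complex.measurable_ofReal.comp (hre_meas.sub hc1meas)).aestronglyMeasurable
        ((Complex.measurable_ofReal.comp (him_meas.sub hc2meas)).mul_const
          Complex.I).aestronglyMeasurable (by norm_num)
    have hDtend : Tendsto D atTop (nhds 0) := by
      have hsum : Tendsto (fun n => eLpNorm (μ₁[fre|myFilt n] - fre) 2 μ₁
          + eLpNorm (μ₁[fim|myFilt n] - fim) 2 μ₁) atTop (nhds 0) := by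
        simpa using Tre.add Tim
      exact tendsto_of_tendsto_of_tendsto_of_le_of_le tendsto_const_nhds hsum
        (fun n => zero_le) hDle
    have hbound : ∀ n, Metric.infDist (MemLp.toLp U₁ hU₁mem) (Hset μ₁ n) ≤ (D n).toReal := by
      intro n
      have hmemH : (hgmem n).toLp (g n) ∈ Hset μ₁ n :=
        ⟨g n, hgmeas n, hgnd n, (hgmem n).coeFn_toLp⟩
      refine (Metric.infDist_le_dist_of_mem hmemH).trans ?_
      rw [Lp.dist_def]
      refine le_of_eq ?_
      congr 1
      refine eLpNorm_congr_ae ?_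
      filter_upwards [hU₁mem.coeFn_toLp, (hgmem n).coeFn_toLp] with x e1 e2
      simp only [Pi.sub_apply, e1, e2]
    have htoReal : Tendsto (fun n => (D n).toReal) atTop (nhds 0) := by
      have := (ENNReal.tendsto_toReal (by simp : (0:ℝ≥0∞) ≠ ⊤)).comp hDtend
      simpa [Function.comp_def] using this
    exact squeeze_zero (fun n => Metric.infDist_nonneg) hbound htoReal
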